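/- arXiv:2512.05162 — 2 statements merged into one kernel-verified Lean document; each statement's English description precedes it below -/
import Mathlib

section
/- Let K be a Markov kernel on a standard Borel space (M, 𝓑(M)) satisfying the Doeblin minorization condition: there exist ε > 0 and a probability measure ν such that K(s, A) ≥ ε·ν(A) for all s ∈ M and all measurable A. Then for any two probability measures μ₁, μ₂ on M, the total variation distance between μ₁K and μ₂K satisfies ‖μ₁K − μ₂K‖_TV ≤ (1 − ε)·‖μ₁ − μ₂‖_TV. -/
open MeasureTheory ProbabilityTheory

/-- Total variation distance between two measures: the supremum over measurable
sets of the absolute difference of the measures. -/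
noncomputable def tvDist {M : Type*} [MeasurableSpace M] (μ₁ μ₂ : Measure M) : ℝ :=
  ⨆ A : {A : Set M // MeasurableSet A}, |(μ₁ A).toReal - (μ₂ A).toReal|

/-- Doeblin minorization implies contraction in total variation: if
`K(s,A) ≥ ε·ν(A)` for all `s, A`, then `‖μ₁K − μ₂K‖_TV ≤ (1−ε)‖μ₁ − μ₂‖_TV`. -/
theorem doeblin_tv_contraction
    {M : Type*} [MeasurableSpace M] [StandardBorelSpace M]
    (K : Kernel M M) [IsMarkovKernel K]
    (ε : ℝ) (hε : 0 < ε)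
    (ν : Measure M) [IsProbabilityMeasure ν]
    (hdoeblin : ∀ s : M, ∀ A : Set M, MeasurableSet A →
      ENNReal.ofReal ε * ν A ≤ K s A)
    (μ₁ μ₂ : Measure M) [IsProbabilityMeasure μ₁] [IsProbabilityMeasure μ₂] :
    tvDist (μ₁.bind (fun s => K s)) (μ₂.bind (fun s => K s))
      ≤ (1 - ε) * tvDist μ₁ μ₂ := by
  haveI : Nonempty M := μ₁.nonempty_of_neZero
  obtain ⟨s₀⟩ := ‹Nonempty M›
  -- ε ≤ 1
  have hε1 : ε ≤ 1 := by
    have h := hdoeblin s₀ Set.univ MeasurableSet.univ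
    simp only [measure_univ, mul_one] at h
    exact ENNReal.ofReal_le_one.mp h
  -- Hahn decomposition
  obtain ⟨S, hSm, hS₁, hS₂⟩ := hahn_decomposition (μ := μ₁) (ν := μ₂)
  set δ : ℝ := (μ₁ S).toReal - (μ₂ S).toReal with hδdef
  have hμ2S : μ₂ S ≤ μ₁ S := hS₁ S hSm subset_rfl
  have hδ0 : 0 ≤ δ := sub_nonneg.mpr (ENNReal.toReal_mono (measure_ne_top _ _) hμ2S)
  have htoReal_le_one : ∀ (μ : Measure M) [IsProbabilityMeasure μ] (A : Set M),
      (μ A).toReal ≤ 1 := by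
    intro μ _ A
    simpa using ENNReal.toReal_mono ENNReal.one_ne_top (prob_le_one (μ := μ) (s := A))
  have hbdd : BddAbove (Set.range fun A : {A : Set M // MeasurableSet A} =>
      |(μ₁ A).toReal - (μ₂ A).toReal|) := by
    refine ⟨2, ?_⟩
    rintro x ⟨A, rfl⟩
    have h1 := htoReal_le_one μ₁ A
    have h2 := htoReal_le_one μ₂ A
    have h3 : (0:ℝ) ≤ (μ₁ (A:Set M)).toReal := ENNReal.toReal_nonneg
    have h4 : (0:ℝ) ≤ (μ₂ (A:Set M)).toReal := ENNReal.toReal_nonneg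
    rw [abs_le]; constructor <;> linarith
  have hδ_le : δ ≤ tvDist μ₁ μ₂ :=
    (le_abs_self _).trans (le_ciSup hbdd ⟨S, hSm⟩)
  -- restricted measure inequalities
  have hle : μ₂.restrict S ≤ μ₁.restrict S := by
    refine Measure.le_iff.mpr fun t ht => ?_
    rw [Measure.restrict_apply ht, Measure.restrict_apply ht]
    exact hS₁ _ (ht.inter hSm) Set.inter_subset_right
  have hle' : μ₁.restrict Sᶜ ≤ μ₂.restrict Sᶜ := by
    refine Measure.le_iff.mpr fun t ht => ?_
    rw [Measure.restrict_apply ht, Measure.restrict_apply ht]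
    exact hS₂ _ (ht.inter hSm.compl) Set.inter_subset_right
  set ρ : Measure M := μ₁.restrict S - μ₂.restrict S with hρdef
  set ρ' : Measure M := μ₂.restrict Sᶜ - μ₁.restrict Sᶜ with hρ'def
  haveI : IsFiniteMeasure ρ := isFiniteMeasure_of_le _ Measure.sub_le
  haveI : IsFiniteMeasure ρ' := isFiniteMeasure_of_le _ Measure.sub_le
  have hρuniv : (ρ Set.univ).toReal = δ := by
    rw [hρdef, Measure.sub_apply MeasurableSet.univ hle,
      Measure.restrict_apply_univ, Measure.restrict_apply_univ,
      ENNReal.toReal_sub_of_le hμ2S (measure_ne_top _ _)]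
  have hcompl : ∀ (μ : Measure M) [IsProbabilityMeasure μ],
      (μ Sᶜ).toReal = 1 - (μ S).toReal := by
    intro μ _
    rw [prob_compl_eq_one_sub hSm,
      ENNReal.toReal_sub_of_le prob_le_one ENNReal.one_ne_top, ENNReal.toReal_one]
  have hμ1Sc : μ₁ Sᶜ ≤ μ₂ Sᶜ := hS₂ Sᶜ hSm.compl subset_rfl
  have hρ'univ : (ρ' Set.univ).toReal = δ := by
    rw [hρ'def, Measure.sub_apply MeasurableSet.univ hle',
      Measure.restrict_apply_univ, Measure.restrict_apply_univ,
      ENNReal.toReal_sub_of_le hμ1Sc (measure_ne_top _ _),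
      hcompl μ₁, hcompl μ₂, hδdef]
    ring
  have hadd : ρ + μ₂.restrict S = μ₁.restrict S :=
    Measure.sub_add_cancel_of_le hle
  have hadd' : ρ' + μ₁.restrict Sᶜ = μ₂.restrict Sᶜ :=
    Measure.sub_add_cancel_of_le hle'
  -- main bound for each measurable A
  refine ciSup_le fun ⟨A, hA⟩ => ?_
  set f : M → ℝ := fun s => (K s A).toReal with hfdef
  have hf_meas : Measurable f := (K.measurable_coe hA).ennreal_toReal
  have hf0 : ∀ s, 0 ≤ f s := fun s => ENNReal.toReal_nonneg
  have hf1 : ∀ s, f s ≤ 1 := fun s => htoReal_le_one (K s) A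
  set m : ℝ := ε * (ν A).toReal with hmdef
  set Mv : ℝ := 1 - ε * (ν Aᶜ).toReal with hMdef
  have hνsum : (ν A).toReal + (ν Aᶜ).toReal = 1 := by
    rw [← ENNReal.toReal_add (measure_ne_top _ _) (measure_ne_top _ _),
      measure_add_measure_compl hA, measure_univ, ENNReal.toReal_one]
  have hMm : Mv - m = 1 - ε := by rw [hMdef, hmdef]; nlinarith
  have hf_lb : ∀ s, m ≤ f s := by
    intro s
    have h := hdoeblin s A hA
    have := ENNReal.toReal_mono (measure_ne_top (K s) A) h
    rwa [ENNReal.toReal_mul, ENNReal.toReal_ofReal hε.le] at this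
  have hf_ub : ∀ s, f s ≤ Mv := by
    intro s
    have h := hdoeblin s Aᶜ hA.compl
    have h2 := ENNReal.toReal_mono (measure_ne_top (K s) Aᶜ) h
    rw [ENNReal.toReal_mul, ENNReal.toReal_ofReal hε.le] at h2
    have hsum : f s + (K s Aᶜ).toReal = 1 := by
      rw [hfdef]
      rw [← ENNReal.toReal_add (measure_ne_top _ _) (measure_ne_top _ _),
        measure_add_measure_compl hA, measure_univ, ENNReal.toReal_one]
    rw [hMdef]; linarith
  have hint : ∀ (μ : Measure M) [IsFiniteMeasure μ], Integrable f μ := by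
    intro μ _
    refine (integrable_const (1:ℝ)).mono' hf_meas.aestronglyMeasurable
      (ae_of_all _ fun s => ?_)
    rw [Real.norm_eq_abs, abs_of_nonneg (hf0 s)]
    exact hf1 s
  have hbind : ∀ (μ : Measure M), ((μ.bind (fun s => K s)) A).toReal = ∫ s, f s ∂μ := by
    intro μ
    rw [Measure.bind_apply hA K.measurable.aemeasurable,
      ← integral_toReal (K.measurable_coe hA).aemeasurable
        (ae_of_all _ fun s => measure_lt_top _ _)]
  -- integral decomposition
  have hdecomp : ∀ (μ : Measure M) [IsFiniteMeasure μ],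
      ∫ s, f s ∂μ = ∫ s in S, f s ∂μ + ∫ s in Sᶜ, f s ∂μ :=
    fun μ _ => (integral_add_compl hSm (hint μ)).symm
  have hsplit1 : ∫ s in S, f s ∂μ₁ = ∫ s, f s ∂ρ + ∫ s in S, f s ∂μ₂ := by
    rw [← hadd, integral_add_measure (hint ρ) (hint _)]
  have hsplit2 : ∫ s in Sᶜ, f s ∂μ₂ = ∫ s, f s ∂ρ' + ∫ s in Sᶜ, f s ∂μ₁ := by
    rw [← hadd', integral_add_measure (hint ρ') (hint _)]
  have hkey : (∫ s, f s ∂μ₁) - (∫ s, f s ∂μ₂) = (∫ s, f s ∂ρ) - ∫ s, f s ∂ρ' := by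
    rw [hdecomp μ₁, hdecomp μ₂, hsplit1, hsplit2]; ring
  -- bounds on ∫ f dρ and ∫ f dρ'
  have hbound : ∀ (τ : Measure M) [IsFiniteMeasure τ], (τ Set.univ).toReal = δ →
      δ * m ≤ (∫ s, f s ∂τ) ∧ (∫ s, f s ∂τ) ≤ δ * Mv := by
    intro τ _ hτ
    constructor
    · calc δ * m = ∫ _, m ∂τ := by rw [integral_const, measureReal_def, hτ, smul_eq_mul]
        _ ≤ ∫ s, f s ∂τ := integral_mono (integrable_const m) (hint τ)
            (fun s => hf_lb s)
    · calc (∫ s, f s ∂τ) ≤ ∫ _, Mv ∂τ := integral_mono (hint τ)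
            (integrable_const Mv) (fun s => hf_ub s)
        _ = δ * Mv := by rw [integral_const, measureReal_def, hτ, smul_eq_mul]
  obtain ⟨h1, h2⟩ := hbound ρ hρuniv
  obtain ⟨h3, h4⟩ := hbound ρ' hρ'univ
  have hfinal : |((μ₁.bind (fun s => K s)) A).toReal -
      ((μ₂.bind (fun s => K s)) A).toReal| ≤ (1 - ε) * δ := by
    rw [hbind μ₁, hbind μ₂, hkey, abs_le]
    constructor <;> nlinarith
  calc |((μ₁.bind (fun s => K s)) A).toReal -
      ((μ₂.bind (fun s => K s)) A).toReal| ≤ (1 - ε) * δ := hfinal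
    _ ≤ (1 - ε) * tvDist μ₁ μ₂ :=
        mul_le_mul_of_nonneg_left hδ_le (by linarith)
end

section
/- Let K be a Markov kernel on a standard Borel space satisfying the Doeblin condition K(s,A) ≥ ε·ν(A) for all s, A, with 0 < ε ≤ 1. Then K admits a unique invariant probability measure μ, and for every initial probability measure μ₀ and every n, ‖μ₀Kⁿ − μ‖_TV ≤ (1 − ε)ⁿ. -/
open MeasureTheory ProbabilityTheory
open scoped ENNReal
set_option linter.unusedSectionVars false

/-- `n`-fold application of a Markov kernel to an initial measure. -/
noncomputable def kernelIter {M : Type*} [MeasurableSpace M] (K : Kernel M M)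
    (n : ℕ) (μ₀ : Measure M) : Measure M :=
  (fun m : Measure M => m.bind (fun s => K s))^[n] μ₀

section DoeblinAux

variable {M : Type*} [MeasurableSpace M]

/-- The residual (sub-Markov) kernel in the Doeblin decomposition. -/
noncomputable def doeblinQ (K : Kernel M M) (ε : ℝ) (ν : Measure M) : M → Measure M :=
  fun s => (ENNReal.ofReal (1 - ε))⁻¹ • (K s - ENNReal.ofReal ε • ν)

/-- Iterates of the residual kernel. -/
noncomputable def qIter (K : Kernel M M) (ε : ℝ) (ν : Measure M) (n : ℕ)
    (m : Measure M) : Measure M :=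
  (fun m : Measure M => m.bind (doeblinQ K ε ν))^[n] m

/-- Candidate invariant measure. -/
noncomputable def doeblinMu (K : Kernel M M) (ε : ℝ) (ν : Measure M) : Measure M :=
  Measure.sum fun k => (ENNReal.ofReal ε * ENNReal.ofReal (1 - ε) ^ k) • qIter K ε ν k ν

variable (K : Kernel M M) [IsMarkovKernel K] (ε : ℝ) (ν : Measure M) [IsProbabilityMeasure ν]

lemma doeblin_le (hd : ∀ s : M, ∀ A : Set M, MeasurableSet A →
    ENNReal.ofReal ε * ν A ≤ K s A) (s : M) :
    ENNReal.ofReal ε • ν ≤ K s :=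
  Measure.le_iff.mpr fun A hA => by simpa using hd s A hA

instance doeblin_fin : IsFiniteMeasure (ENNReal.ofReal ε • ν) :=
  ⟨by simp [ENNReal.ofReal_lt_top]⟩

lemma doeblinQ_apply (hd : ∀ s : M, ∀ A : Set M, MeasurableSet A →
    ENNReal.ofReal ε * ν A ≤ K s A) (s : M) {A : Set M} (hA : MeasurableSet A) :
    doeblinQ K ε ν s A = (ENNReal.ofReal (1 - ε))⁻¹ * (K s A - ENNReal.ofReal ε * ν A) := by
  rw [doeblinQ, Measure.smul_apply, Measure.sub_apply hA (doeblin_le K ε ν hd s)]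
  simp

lemma doeblinQ_measurable (hd : ∀ s : M, ∀ A : Set M, MeasurableSet A →
    ENNReal.ofReal ε * ν A ≤ K s A) :
    Measurable (doeblinQ K ε ν) := by
  apply Measure.measurable_of_measurable_coe
  intro A hA
  simp_rw [fun s => doeblinQ_apply K ε ν hd s hA]
  exact ((K.measurable_coe hA).sub measurable_const).const_mul _

lemma doeblin_ofReal_add (hε0 : 0 < ε) (hε1 : ε ≤ 1) :
    ENNReal.ofReal ε + ENNReal.ofReal (1 - ε) = 1 := by
  rw [← ENNReal.ofReal_add hε0.le (by linarith)]
  norm_num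

lemma doeblin_one_sub (hε0 : 0 < ε) (hε1 : ε ≤ 1) :
    (1 : ℝ≥0∞) - ENNReal.ofReal (1 - ε) = ENNReal.ofReal ε :=
  ENNReal.sub_eq_of_eq_add ENNReal.ofReal_ne_top (doeblin_ofReal_add ε hε0 hε1).symm

lemma doeblin_one_sub' (hε0 : 0 < ε) (hε1 : ε ≤ 1) :
    (1 : ℝ≥0∞) - ENNReal.ofReal ε = ENNReal.ofReal (1 - ε) :=
  ENNReal.sub_eq_of_eq_add ENNReal.ofReal_ne_top
    (by rw [add_comm]; exact (doeblin_ofReal_add ε hε0 hε1).symm)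

lemma doeblin_K_decomp (hε0 : 0 < ε) (hε1 : ε ≤ 1)
    (hd : ∀ s : M, ∀ A : Set M, MeasurableSet A → ENNReal.ofReal ε * ν A ≤ K s A)
    (s : M) {A : Set M} (hA : MeasurableSet A) :
    K s A = ENNReal.ofReal ε * ν A + ENNReal.ofReal (1 - ε) * doeblinQ K ε ν s A := by
  rcases lt_or_eq_of_le hε1 with hlt | heq
  · have hδ0 : ENNReal.ofReal (1 - ε) ≠ 0 := by
      simp only [ne_eq, ENNReal.ofReal_eq_zero, not_le]; linarith
    rw [doeblinQ_apply K ε ν hd s hA, ← mul_assoc,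
      ENNReal.mul_inv_cancel hδ0 ENNReal.ofReal_ne_top, one_mul,
      add_tsub_cancel_of_le (hd s A hA)]
  · have he1 : ENNReal.ofReal ε = 1 := by rw [heq]; simp
    have hδ0 : ENNReal.ofReal (1 - ε) = 0 := by rw [heq]; simp
    have hKν : K s A = ν A := by
      have h1 : ν A ≤ K s A := by simpa [he1] using hd s A hA
      have h2 : ν Aᶜ ≤ K s Aᶜ := by simpa [he1] using hd s Aᶜ hA.compl
      have hν : ν A + ν Aᶜ = 1 := by rw [measure_add_measure_compl hA, measure_univ]
      have hK : K s A + K s Aᶜ = 1 := by rw [measure_add_measure_compl hA, measure_univ]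
      refine le_antisymm ?_ h1
      rw [ENNReal.eq_sub_of_add_eq (measure_ne_top _ _) hK,
        ENNReal.eq_sub_of_add_eq (measure_ne_top _ _) hν]
      exact tsub_le_tsub_left h2 1
    rw [hKν, he1, hδ0, one_mul, zero_mul, add_zero]

lemma doeblinQ_univ_le (hε0 : 0 < ε) (hε1 : ε ≤ 1)
    (hd : ∀ s : M, ∀ A : Set M, MeasurableSet A → ENNReal.ofReal ε * ν A ≤ K s A) (s : M) :
    doeblinQ K ε ν s Set.univ ≤ 1 := by
  rw [doeblinQ_apply K ε ν hd s MeasurableSet.univ]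
  simp only [measure_univ, mul_one]
  rw [doeblin_one_sub' ε hε0 hε1]
  rcases eq_or_ne (ENNReal.ofReal (1 - ε)) 0 with h0 | h0
  · simp [h0]
  · rw [ENNReal.inv_mul_cancel h0 ENNReal.ofReal_ne_top]

lemma doeblinQ_univ_eq (hε0 : 0 < ε) (hlt : ε < 1)
    (hd : ∀ s : M, ∀ A : Set M, MeasurableSet A → ENNReal.ofReal ε * ν A ≤ K s A) (s : M) :
    doeblinQ K ε ν s Set.univ = 1 := by
  rw [doeblinQ_apply K ε ν hd s MeasurableSet.univ]
  simp only [measure_univ, mul_one]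
  rw [doeblin_one_sub' ε hε0 hlt.le]
  exact ENNReal.inv_mul_cancel
    (by simp only [ne_eq, ENNReal.ofReal_eq_zero, not_le]; linarith) ENNReal.ofReal_ne_top

lemma qIter_succ' (n : ℕ) (m : Measure M) :
    qIter K ε ν (n + 1) m = (qIter K ε ν n m).bind (doeblinQ K ε ν) :=
  Function.iterate_succ_apply' _ n m

lemma qIter_univ_le (hε0 : 0 < ε) (hε1 : ε ≤ 1)
    (hd : ∀ s : M, ∀ A : Set M, MeasurableSet A → ENNReal.ofReal ε * ν A ≤ K s A)
    (m : Measure M) (hm : m Set.univ ≤ 1) (n : ℕ) :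
    qIter K ε ν n m Set.univ ≤ 1 := by
  induction n with
  | zero => exact hm
  | succ n ih =>
    rw [qIter_succ',
      Measure.bind_apply MeasurableSet.univ (doeblinQ_measurable K ε ν hd).aemeasurable]
    calc ∫⁻ s, doeblinQ K ε ν s Set.univ ∂(qIter K ε ν n m)
        ≤ ∫⁻ _, 1 ∂(qIter K ε ν n m) :=
          lintegral_mono fun s => doeblinQ_univ_le K ε ν hε0 hε1 hd s
      _ = qIter K ε ν n m Set.univ := lintegral_one
      _ ≤ 1 := ih

lemma qIter_univ_eq (hε0 : 0 < ε) (hlt : ε < 1)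
    (hd : ∀ s : M, ∀ A : Set M, MeasurableSet A → ENNReal.ofReal ε * ν A ≤ K s A)
    (m : Measure M) (hm : m Set.univ = 1) (n : ℕ) :
    qIter K ε ν n m Set.univ = 1 := by
  induction n with
  | zero => exact hm
  | succ n ih =>
    rw [qIter_succ',
      Measure.bind_apply MeasurableSet.univ (doeblinQ_measurable K ε ν hd).aemeasurable,
      lintegral_congr fun s => doeblinQ_univ_eq K ε ν hε0 hlt hd s, lintegral_one, ih]

lemma doeblin_qmass (hε0 : 0 < ε) (hε1 : ε ≤ 1)
    (hd : ∀ s : M, ∀ A : Set M, MeasurableSet A → ENNReal.ofReal ε * ν A ≤ K s A) (k : ℕ) :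
    ENNReal.ofReal (1 - ε) ^ k * qIter K ε ν k ν Set.univ = ENNReal.ofReal (1 - ε) ^ k := by
  rcases lt_or_eq_of_le hε1 with hlt | heq
  · rw [qIter_univ_eq K ε ν hε0 hlt hd ν measure_univ k, mul_one]
  · have hδ0 : ENNReal.ofReal (1 - ε) = 0 := by rw [heq]; simp
    cases k with
    | zero => simp [qIter]
    | succ k => simp [hδ0]

lemma doeblin_bind_K (hε0 : 0 < ε) (hε1 : ε ≤ 1)
    (hd : ∀ s : M, ∀ A : Set M, MeasurableSet A → ENNReal.ofReal ε * ν A ≤ K s A)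
    (m : Measure M) (hm : m Set.univ = 1) :
    m.bind (fun s => K s) = ENNReal.ofReal ε • ν
      + ENNReal.ofReal (1 - ε) • m.bind (doeblinQ K ε ν) := by
  ext A hA
  have hQA : Measurable fun s => doeblinQ K ε ν s A :=
    (Measure.measurable_coe hA).comp (doeblinQ_measurable K ε ν hd)
  rw [Measure.bind_apply hA K.measurable.aemeasurable,
    lintegral_congr fun s => doeblin_K_decomp K ε ν hε0 hε1 hd s hA,
    lintegral_add_left measurable_const,
    lintegral_const_mul _ hQA,
    lintegral_const, hm, mul_one]
  rw [Measure.add_apply, Measure.smul_apply, Measure.smul_apply, smul_eq_mul, smul_eq_mul,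
    Measure.bind_apply hA (doeblinQ_measurable K ε ν hd).aemeasurable]

lemma doeblin_bind_add (m₁ m₂ : Measure M) {f : M → Measure M} (hf : Measurable f) :
    (m₁ + m₂).bind f = m₁.bind f + m₂.bind f := by
  ext A hA
  rw [Measure.bind_apply hA hf.aemeasurable, lintegral_add_measure, Measure.add_apply,
    Measure.bind_apply hA hf.aemeasurable, Measure.bind_apply hA hf.aemeasurable]

lemma doeblin_bind_smul (c : ℝ≥0∞) (m : Measure M) {f : M → Measure M} (hf : Measurable f) :
    (c • m).bind f = c • m.bind f := by
  ext A hA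
  rw [Measure.bind_apply hA hf.aemeasurable, lintegral_smul_measure, Measure.smul_apply,
    Measure.bind_apply hA hf.aemeasurable, smul_eq_mul]

lemma doeblin_bind_sum {ι : Type*} (s : Finset ι) (μ : ι → Measure M)
    {f : M → Measure M} (hf : Measurable f) :
    (∑ i ∈ s, μ i).bind f = ∑ i ∈ s, (μ i).bind f := by
  ext A hA
  rw [Measure.bind_apply hA hf.aemeasurable, lintegral_finset_sum_measure,
    Measure.finset_sum_apply]
  exact Finset.sum_congr rfl fun i _ => (Measure.bind_apply hA hf.aemeasurable).symm

lemma kernelIter_succ' (n : ℕ) (μ₀ : Measure M) :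
    kernelIter K (n + 1) μ₀ = (kernelIter K n μ₀).bind (fun s => K s) :=
  Function.iterate_succ_apply' _ n μ₀

lemma kernelIter_univ (n : ℕ) (μ₀ : Measure M) (hm : μ₀ Set.univ = 1) :
    kernelIter K n μ₀ Set.univ = 1 := by
  induction n with
  | zero => exact hm
  | succ n ih =>
    rw [kernelIter_succ', Measure.bind_apply MeasurableSet.univ K.measurable.aemeasurable]
    simp only [measure_univ]
    rw [lintegral_one, ih]

lemma kernelIter_decomp (hε0 : 0 < ε) (hε1 : ε ≤ 1)
    (hd : ∀ s : M, ∀ A : Set M, MeasurableSet A → ENNReal.ofReal ε * ν A ≤ K s A)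
    (μ₀ : Measure M) (hμ₀ : μ₀ Set.univ = 1) (n : ℕ) :
    kernelIter K n μ₀ =
      (∑ k ∈ Finset.range n,
        (ENNReal.ofReal ε * ENNReal.ofReal (1 - ε) ^ k) • qIter K ε ν k ν)
      + ENNReal.ofReal (1 - ε) ^ n • qIter K ε ν n μ₀ := by
  have hQm := doeblinQ_measurable K ε ν hd
  induction n with
  | zero => simp [kernelIter, qIter]
  | succ n ih =>
    rw [kernelIter_succ',
      doeblin_bind_K K ε ν hε0 hε1 hd _ (kernelIter_univ K n μ₀ hμ₀), ih,
      doeblin_bind_add _ _ hQm, doeblin_bind_sum _ _ hQm, doeblin_bind_smul _ _ hQm]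
    simp_rw [doeblin_bind_smul _ _ hQm, ← qIter_succ']
    rw [Finset.sum_range_succ']
    simp only [smul_add, Finset.smul_sum, smul_smul, pow_zero, mul_one, one_smul]
    have h0 : qIter K ε ν 0 ν = ν := rfl
    rw [h0]
    simp_rw [← mul_assoc, mul_comm (ENNReal.ofReal (1 - ε)) (ENNReal.ofReal ε), mul_assoc,
      ← pow_succ']
    abel

end DoeblinAux

section DoeblinMain

variable {M : Type*} [MeasurableSpace M]
variable (K : Kernel M M) [IsMarkovKernel K] (ε : ℝ) (ν : Measure M) [IsProbabilityMeasure ν]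

lemma doeblinMu_apply {A : Set M} (hA : MeasurableSet A) :
    doeblinMu K ε ν A
      = ∑' k, ENNReal.ofReal ε * ENNReal.ofReal (1 - ε) ^ k * qIter K ε ν k ν A := by
  rw [doeblinMu, Measure.sum_apply _ hA]
  simp [Measure.smul_apply, smul_eq_mul]

lemma doeblin_geom (hε0 : 0 < ε) (hε1 : ε ≤ 1) :
    ∑' k : ℕ, ENNReal.ofReal ε * ENNReal.ofReal (1 - ε) ^ k = 1 := by
  rw [ENNReal.tsum_mul_left, ENNReal.tsum_geometric, doeblin_one_sub ε hε0 hε1,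
    ENNReal.mul_inv_cancel (by simpa [ENNReal.ofReal_eq_zero] using hε0) ENNReal.ofReal_ne_top]

lemma doeblinMu_univ (hε0 : 0 < ε) (hε1 : ε ≤ 1)
    (hd : ∀ s : M, ∀ A : Set M, MeasurableSet A → ENNReal.ofReal ε * ν A ≤ K s A) :
    doeblinMu K ε ν Set.univ = 1 := by
  rw [doeblinMu_apply K ε ν MeasurableSet.univ]
  have h : ∀ k : ℕ, ENNReal.ofReal ε * ENNReal.ofReal (1 - ε) ^ k * qIter K ε ν k ν Set.univ
      = ENNReal.ofReal ε * ENNReal.ofReal (1 - ε) ^ k := fun k => by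
    rw [mul_assoc, doeblin_qmass K ε ν hε0 hε1 hd k]
  calc ∑' k : ℕ, ENNReal.ofReal ε * ENNReal.ofReal (1 - ε) ^ k * qIter K ε ν k ν Set.univ
      = ∑' k : ℕ, ENNReal.ofReal ε * ENNReal.ofReal (1 - ε) ^ k := tsum_congr h
    _ = 1 := doeblin_geom ε hε0 hε1

lemma doeblinMu_bind (hε0 : 0 < ε) (hε1 : ε ≤ 1)
    (hd : ∀ s : M, ∀ A : Set M, MeasurableSet A → ENNReal.ofReal ε * ν A ≤ K s A) :
    (doeblinMu K ε ν).bind (fun s => K s) = doeblinMu K ε ν := by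
  have hQm := doeblinQ_measurable K ε ν hd
  rw [doeblin_bind_K K ε ν hε0 hε1 hd _ (doeblinMu_univ K ε ν hε0 hε1 hd)]
  ext A hA
  rw [Measure.add_apply, Measure.smul_apply, Measure.smul_apply, smul_eq_mul, smul_eq_mul,
    Measure.bind_apply hA hQm.aemeasurable]
  have hq : ∀ k, ∫⁻ s, doeblinQ K ε ν s A ∂(qIter K ε ν k ν) = qIter K ε ν (k + 1) ν A :=
    fun k => by rw [qIter_succ', Measure.bind_apply hA hQm.aemeasurable]
  have hint : ∫⁻ s, doeblinQ K ε ν s A ∂(doeblinMu K ε ν)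
      = ∑' k, ENNReal.ofReal ε * ENNReal.ofReal (1 - ε) ^ k * qIter K ε ν (k + 1) ν A := by
    rw [doeblinMu, lintegral_sum_measure]
    exact tsum_congr fun k => by rw [lintegral_smul_measure, hq k, smul_eq_mul]
  rw [hint, doeblinMu_apply K ε ν hA]
  conv_rhs => rw [tsum_eq_zero_add' ENNReal.summable]
  rw [← ENNReal.tsum_mul_left]
  congr 1
  · show ENNReal.ofReal ε * ν A
        = ENNReal.ofReal ε * ENNReal.ofReal (1 - ε) ^ 0 * qIter K ε ν 0 ν A
    simp [qIter]
  · exact tsum_congr fun k => by ring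

lemma doeblin_key (hε0 : 0 < ε) (hε1 : ε ≤ 1)
    (hd : ∀ s : M, ∀ A : Set M, MeasurableSet A → ENNReal.ofReal ε * ν A ≤ K s A)
    (μ₀ : Measure M) (hμ₀ : μ₀ Set.univ = 1) (n : ℕ) {A : Set M} (hA : MeasurableSet A) :
    |((kernelIter K n μ₀) A).toReal - ((doeblinMu K ε ν) A).toReal| ≤ (1 - ε) ^ n := by
  set e := ENNReal.ofReal ε with he
  set δ := ENNReal.ofReal (1 - ε) with hδ
  set S := ∑ k ∈ Finset.range n, e * δ ^ k * qIter K ε ν k ν A with hS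
  set R := δ ^ n * qIter K ε ν n μ₀ A with hR
  set T := ∑' k : ℕ, e * δ ^ (k + n) * qIter K ε ν (k + n) ν A with hT
  have h1 : kernelIter K n μ₀ A = S + R := by
    rw [kernelIter_decomp K ε ν hε0 hε1 hd μ₀ hμ₀ n, Measure.add_apply,
      Measure.finset_sum_apply, Measure.smul_apply, smul_eq_mul]
    simp_rw [Measure.smul_apply, smul_eq_mul]
    rfl
  have h2 : doeblinMu K ε ν A = S + T := by
    rw [doeblinMu_apply K ε ν hA, ← Summable.sum_add_tsum_nat_add' (k := n) ENNReal.summable]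
  have hRle : R ≤ δ ^ n := by
    rw [hR]
    calc δ ^ n * qIter K ε ν n μ₀ A ≤ δ ^ n * 1 := by
          apply mul_le_mul_right
          exact le_trans (measure_mono (Set.subset_univ A))
            (qIter_univ_le K ε ν hε0 hε1 hd μ₀ hμ₀.le n)
      _ = δ ^ n := mul_one _
  have hTle : T ≤ δ ^ n := by
    rw [hT]
    calc ∑' k : ℕ, e * δ ^ (k + n) * qIter K ε ν (k + n) ν A
        ≤ ∑' k : ℕ, e * δ ^ (k + n) := by
          apply ENNReal.tsum_le_tsum
          intro k
          calc e * δ ^ (k + n) * qIter K ε ν (k + n) ν A ≤ e * δ ^ (k + n) * 1 := by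
                apply mul_le_mul_right
                exact le_trans (measure_mono (Set.subset_univ A))
                  (qIter_univ_le K ε ν hε0 hε1 hd ν measure_univ.le _)
            _ = e * δ ^ (k + n) := mul_one _
      _ = (∑' k : ℕ, e * δ ^ k) * δ ^ n := by
          rw [← ENNReal.tsum_mul_right]
          exact tsum_congr fun k => by rw [pow_add, mul_assoc]
      _ = δ ^ n := by rw [doeblin_geom ε hε0 hε1, one_mul]
  have hδn : δ ^ n ≠ ⊤ := by
    exact ENNReal.pow_ne_top ENNReal.ofReal_ne_top
  have hSne : S ≠ ⊤ := by
    refine ne_top_of_le_ne_top (by simp : (1 : ℝ≥0∞) ≠ ⊤) ?_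
    calc S ≤ S + T := le_self_add
      _ = doeblinMu K ε ν A := h2.symm
      _ ≤ doeblinMu K ε ν Set.univ := measure_mono (Set.subset_univ A)
      _ = 1 := doeblinMu_univ K ε ν hε0 hε1 hd
  have hRne : R ≠ ⊤ := ne_top_of_le_ne_top hδn hRle
  have hTne : T ≠ ⊤ := ne_top_of_le_ne_top hδn hTle
  have hδR : (δ ^ n).toReal = (1 - ε) ^ n := by
    rw [hδ, ← ENNReal.ofReal_pow (by linarith), ENNReal.toReal_ofReal (pow_nonneg (by linarith) n)]
  rw [h1, h2, ENNReal.toReal_add hSne hRne, ENNReal.toReal_add hSne hTne,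
    add_sub_add_left_eq_sub, abs_sub_le_iff]
  constructor
  · calc R.toReal - T.toReal ≤ R.toReal := sub_le_self _ ENNReal.toReal_nonneg
      _ ≤ (δ ^ n).toReal := ENNReal.toReal_mono hδn hRle
      _ = (1 - ε) ^ n := hδR
  · calc T.toReal - R.toReal ≤ T.toReal := sub_le_self _ ENNReal.toReal_nonneg
      _ ≤ (δ ^ n).toReal := ENNReal.toReal_mono hδn hTle
      _ = (1 - ε) ^ n := hδR

end DoeblinMain

/-- Under the Doeblin condition, a Markov kernel has a unique invariant probability
measure `μ`, and `‖μ₀Kⁿ − μ‖_TV ≤ (1−ε)ⁿ` for every initial law `μ₀`. -/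
theorem doeblin_unique_invariant_measure
    {M : Type*} [MeasurableSpace M] [StandardBorelSpace M]
    (K : Kernel M M) [IsMarkovKernel K]
    (ε : ℝ) (hε0 : 0 < ε) (hε1 : ε ≤ 1)
    (ν : Measure M) [IsProbabilityMeasure ν]
    (hdoeblin : ∀ s : M, ∀ A : Set M, MeasurableSet A →
      ENNReal.ofReal ε * ν A ≤ K s A) :
    ∃ μ : Measure M, IsProbabilityMeasure μ ∧ μ.bind (fun s => K s) = μ ∧
      (∀ μ' : Measure M, IsProbabilityMeasure μ' →
        μ'.bind (fun s => K s) = μ' → μ' = μ) ∧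
      (∀ μ₀ : Measure M, IsProbabilityMeasure μ₀ → ∀ n : ℕ,
        tvDist (kernelIter K n μ₀) μ ≤ (1 - ε) ^ n) := by
  haveI hP : IsProbabilityMeasure (doeblinMu K ε ν) :=
    ⟨doeblinMu_univ K ε ν hε0 hε1 hdoeblin⟩
  refine ⟨doeblinMu K ε ν, hP, doeblinMu_bind K ε ν hε0 hε1 hdoeblin, ?_, ?_⟩
  · intro μ' hμ' hinv
    haveI := hμ'
    have hfix : ∀ n, kernelIter K n μ' = μ' := by
      intro n
      induction n with
      | zero => rfl
      | succ n ih => rw [kernelIter_succ', ih, hinv]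
    ext A hA
    have hbound : ∀ n : ℕ, |(μ' A).toReal - (doeblinMu K ε ν A).toReal| ≤ (1 - ε) ^ n := by
      intro n
      have h := doeblin_key K ε ν hε0 hε1 hdoeblin μ' measure_univ n hA
      rwa [hfix n] at h
    have htend : Filter.Tendsto (fun n : ℕ => (1 - ε) ^ n) Filter.atTop (nhds 0) :=
      tendsto_pow_atTop_nhds_zero_of_lt_one (by linarith) (by linarith)
    have h0 : |(μ' A).toReal - (doeblinMu K ε ν A).toReal| ≤ 0 :=
      ge_of_tendsto' htend hbound
    have habs : (μ' A).toReal - (doeblinMu K ε ν A).toReal = 0 :=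
      abs_eq_zero.mp (le_antisymm h0 (abs_nonneg _))
    have heq : (μ' A).toReal = (doeblinMu K ε ν A).toReal := by linarith
    exact (ENNReal.toReal_eq_toReal_iff' (measure_ne_top _ _) (measure_ne_top _ _)).mp heq
  · intro μ₀ hμ₀ n
    haveI := hμ₀
    haveI : Nonempty {A : Set M // MeasurableSet A} := ⟨⟨∅, MeasurableSet.empty⟩⟩
    refine ciSup_le ?_
    rintro ⟨A, hA⟩
    exact doeblin_key K ε ν hε0 hε1 hdoeblin μ₀ measure_univ n hA
end
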